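/- Let f and f̂ be two continuous strictly positive probability densities on [0,1] such that f, f̂ and u'' are all logconcave, and suppose f̂ is uniformly less variable than f, i.e., there exists p ∈ [0,1] such that f̂(t)/f(t) is nondecreasing on [0, p] and nonincreasing on [p, 1]. Let (s; x) be a solution of the dual system for (f, u) and (ŝ; x̂) a solution of the dual system for (f̂, u), and form the interleaved vectors z = (x₁, s₁, x₂, …, s_{N−1}, x_N) and ẑ = (x̂₁, ŝ₁, x̂₂, …, ŝ_{N−1}, x̂_N) of length 2N−1. Then ẑ crosses z at most once and from above: there exists n* ∈ {0, 1, …, 2N−1} such that ẑ_j ≥ z_j for all j ≤ n* and ẑ_j ≤ z_j for all j > n*. -/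

import Mathlib

open MeasureTheory Set

/-- The mean of the "density" `g` conditional on the interval `(a, b)`. -/
noncomputable def condMean (g : ℝ → ℝ) (a b : ℝ) : ℝ :=
  (∫ t in a..b, t * g t) / (∫ t in a..b, g t)

/-- A strictly positive function on `[0,1]` is logconcave if its log is concave there. -/
def LogConcaveOn01 (g : ℝ → ℝ) : Prop :=
  ConcaveOn ℝ (Icc (0:ℝ) 1) fun t => Real.log (g t)

/-- The dual system: cutoffs `0 = s 0 < s 1 < … < s N = 1` and signals `x 1, …, x N`. -/
def DualSystem (g w : ℝ → ℝ) (N : ℕ) (s x : ℕ → ℝ) : Prop :=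
  s 0 = 0 ∧ s N = 1 ∧ (∀ k < N, s k < s (k + 1)) ∧
    (∀ k, 1 ≤ k → k ≤ N → x k = condMean g (s (k - 1)) (s k)) ∧
    (∀ k, 1 ≤ k → k ≤ N - 1 → s k = condMean w (x k) (x (k + 1)))

/-- The interleaved vector `z = (x 1, s 1, x 2, …, s (N-1), x N)`:
`z (2k-1) = x k` and `z (2k) = s k`. -/
noncomputable def zvec (s x : ℕ → ℝ) (j : ℕ) : ℝ :=
  if j % 2 = 1 then x ((j + 1) / 2) else s (j / 2)

section Basic
variable {g : ℝ → ℝ} {a b : ℝ}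

lemma integral_pos_of_pos (hg : Continuous g) (hab : a < b)
    (hpos : ∀ t ∈ Icc a b, 0 < g t) : 0 < ∫ t in a..b, g t :=
  intervalIntegral.intervalIntegral_pos_of_pos_on (hg.intervalIntegrable a b)
    (fun t ht => hpos t ⟨ht.1.le, ht.2.le⟩) hab

/-- numerator identity: ∫ (t-c) g = M - c I -/
lemma integral_shift_mul (hg : Continuous g) (c : ℝ) :
    (∫ t in a..b, (t - c) * g t) = (∫ t in a..b, t * g t) - c * ∫ t in a..b, g t := by
  have hc1 : Continuous fun t : ℝ => t * g t := by fun_prop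
  have hc2 : Continuous fun t : ℝ => c * g t := by fun_prop
  have h1 : (∫ t in a..b, (t - c) * g t)
      = (∫ t in a..b, ((fun t => t * g t) t - (fun t => c * g t) t)) := by
    congr 1; ext t; ring
  rw [h1, intervalIntegral.integral_sub (hc1.intervalIntegrable a b)
    (hc2.intervalIntegrable a b), intervalIntegral.integral_const_mul]

lemma condMean_mem (hg : Continuous g) (hab : a < b)
    (hpos : ∀ t ∈ Icc a b, 0 < g t) : a < condMean g a b ∧ condMean g a b < b := by
  have hI : 0 < ∫ t in a..b, g t := integral_pos_of_pos hg hab hpos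
  constructor
  · have hc : Continuous fun t : ℝ => (t - a) * g t := by fun_prop
    have h2 : 0 < ∫ t in a..b, (t - a) * g t := by
      apply intervalIntegral.intervalIntegral_pos_of_pos_on
        (hc.intervalIntegrable a b) _ hab
      intro t ht
      exact mul_pos (by linarith [ht.1]) (hpos t ⟨ht.1.le, ht.2.le⟩)
    rw [integral_shift_mul hg a] at h2
    rw [condMean, lt_div_iff₀ hI]
    linarith
  · have hc : Continuous fun t : ℝ => (b - t) * g t := by fun_prop
    have h2 : 0 < ∫ t in a..b, (b - t) * g t := by
      apply intervalIntegral.intervalIntegral_pos_of_pos_on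
        (hc.intervalIntegrable a b) _ hab
      intro t ht
      exact mul_pos (by linarith [ht.2]) (hpos t ⟨ht.1.le, ht.2.le⟩)
    have h3 : (∫ t in a..b, (b - t) * g t)
        = b * (∫ t in a..b, g t) - ∫ t in a..b, t * g t := by
      have h5 := integral_shift_mul (a := a) (b := b) hg b
      have h4 : (∫ t in a..b, (b - t) * g t) = - ∫ t in a..b, (t - b) * g t := by
        rw [← intervalIntegral.integral_neg]; congr 1; ext t; ring
      rw [h4, h5]; ring
    rw [condMean, div_lt_iff₀ hI]
    linarith [h3 ▸ h2]
end Basic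

section M1
variable {g : ℝ → ℝ} {a a' b b' : ℝ}

lemma condMean_lt_right (hg : Continuous g) (hab : a < b) (hbb' : b < b')
    (hpos : ∀ t ∈ Icc a b', 0 < g t) : condMean g a b < condMean g a b' := by
  have hab' : a < b' := hab.trans hbb'
  have hposab : ∀ t ∈ Icc a b, 0 < g t := fun t ht => hpos t ⟨ht.1, ht.2.trans hbb'.le⟩
  have hposbb' : ∀ t ∈ Icc b b', 0 < g t := fun t ht => hpos t ⟨hab.le.trans ht.1, ht.2⟩
  have hI1 : 0 < ∫ t in a..b, g t := integral_pos_of_pos hg hab hposab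
  have hI2 : 0 < ∫ t in b..b', g t := integral_pos_of_pos hg hbb' hposbb'
  have hI3 : 0 < ∫ t in a..b', g t := integral_pos_of_pos hg hab' hpos
  have hcm1 := condMean_mem hg hab hposab
  have hcm2 := condMean_mem hg hbb' hposbb'
  have htg : Continuous fun t : ℝ => t * g t := by fun_prop
  have hIsplit : (∫ t in a..b, g t) + (∫ t in b..b', g t) = ∫ t in a..b', g t :=
    intervalIntegral.integral_add_adjacent_intervals (hg.intervalIntegrable a b)
      (hg.intervalIntegrable b b')
  have hMsplit : (∫ t in a..b, t * g t) + (∫ t in b..b', t * g t) = ∫ t in a..b', t * g t :=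
    intervalIntegral.integral_add_adjacent_intervals (htg.intervalIntegrable a b)
      (htg.intervalIntegrable b b')
  rw [condMean, condMean, div_lt_div_iff₀ hI1 hI3, ← hIsplit, ← hMsplit]
  have e1 : condMean g a b * (∫ t in a..b, g t) = ∫ t in a..b, t * g t := by
    rw [condMean]; field_simp
  have e2 : condMean g b b' * (∫ t in b..b', g t) = ∫ t in b..b', t * g t := by
    rw [condMean]; field_simp
  nlinarith [hcm1.2, hcm2.1, mul_pos hI1 hI2]

lemma condMean_lt_left (hg : Continuous g) (haa' : a < a') (ha'b : a' < b)
    (hpos : ∀ t ∈ Icc a b, 0 < g t) : condMean g a b < condMean g a' b := by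
  have hab : a < b := haa'.trans ha'b
  have hposa : ∀ t ∈ Icc a a', 0 < g t := fun t ht => hpos t ⟨ht.1, ht.2.trans ha'b.le⟩
  have hposb : ∀ t ∈ Icc a' b, 0 < g t := fun t ht => hpos t ⟨haa'.le.trans ht.1, ht.2⟩
  have hI1 : 0 < ∫ t in a..a', g t := integral_pos_of_pos hg haa' hposa
  have hI2 : 0 < ∫ t in a'..b, g t := integral_pos_of_pos hg ha'b hposb
  have hI3 : 0 < ∫ t in a..b, g t := integral_pos_of_pos hg hab hpos
  have hcm1 := condMean_mem hg haa' hposa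
  have hcm2 := condMean_mem hg ha'b hposb
  have htg : Continuous fun t : ℝ => t * g t := by fun_prop
  have hIsplit : (∫ t in a..a', g t) + (∫ t in a'..b, g t) = ∫ t in a..b, g t :=
    intervalIntegral.integral_add_adjacent_intervals (hg.intervalIntegrable a a')
      (hg.intervalIntegrable a' b)
  have hMsplit : (∫ t in a..a', t * g t) + (∫ t in a'..b, t * g t) = ∫ t in a..b, t * g t :=
    intervalIntegral.integral_add_adjacent_intervals (htg.intervalIntegrable a a')
      (htg.intervalIntegrable a' b)
  rw [condMean, condMean, div_lt_div_iff₀ hI3 hI2, ← hIsplit, ← hMsplit]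
  have e1 : condMean g a a' * (∫ t in a..a', g t) = ∫ t in a..a', t * g t := by
    rw [condMean]; field_simp
  have e2 : condMean g a' b * (∫ t in a'..b, g t) = ∫ t in a'..b, t * g t := by
    rw [condMean]; field_simp
  nlinarith [hcm1.2, hcm2.1, mul_pos hI1 hI2]

lemma condMean_le_right (hg : Continuous g) (hab : a < b) (hbb' : b ≤ b')
    (hpos : ∀ t ∈ Icc a b', 0 < g t) : condMean g a b ≤ condMean g a b' := by
  rcases eq_or_lt_of_le hbb' with h | h
  · rw [h]
  · exact (condMean_lt_right hg hab h hpos).le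

lemma condMean_le_left (hg : Continuous g) (haa' : a ≤ a') (ha'b : a' < b)
    (hpos : ∀ t ∈ Icc a b, 0 < g t) : condMean g a b ≤ condMean g a' b := by
  rcases eq_or_lt_of_le haa' with h | h
  · rw [h]
  · exact (condMean_lt_left hg h ha'b hpos).le
end M1

section M2
variable {g1 g2 : ℝ → ℝ} {a b : ℝ}

lemma condMean_le_condMean_of_ratio_mono (hg1 : Continuous g1) (hg2 : Continuous g2)
    (hab : a < b) (hpos1 : ∀ t ∈ Icc a b, 0 < g1 t) (hpos2 : ∀ t ∈ Icc a b, 0 < g2 t)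
    (hr : MonotoneOn (fun t => g2 t / g1 t) (Icc a b)) :
    condMean g1 a b ≤ condMean g2 a b := by
  set φ := condMean g1 a b with hφ
  have hmem := condMean_mem hg1 hab hpos1
  have hφI : φ ∈ Icc a b := ⟨hmem.1.le, hmem.2.le⟩
  set c := g2 φ / g1 φ with hc
  have hI1 : 0 < ∫ t in a..b, g1 t := integral_pos_of_pos hg1 hab hpos1
  have hI2 : 0 < ∫ t in a..b, g2 t := integral_pos_of_pos hg2 hab hpos2
  -- ∫ (t-φ) g1 = 0
  have h0 : (∫ t in a..b, (t - φ) * g1 t) = 0 := by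
    rw [integral_shift_mul hg1 φ, hφ, condMean]
    field_simp; ring
  -- pointwise nonneg
  have hptwise : ∀ t ∈ Icc a b, 0 ≤ (t - φ) * g2 t - c * ((t - φ) * g1 t) := by
    intro t ht
    have hkey : (t - φ) * g2 t - c * ((t - φ) * g1 t) = (t - φ) * (g2 t - c * g1 t) := by ring
    rw [hkey]
    have hg1t := hpos1 t ht
    rcases le_total φ t with h | h
    · apply mul_nonneg (by linarith)
      have := hr hφI ht h
      have h2 : g2 φ / g1 φ * g1 t ≤ g2 t / g1 t * g1 t :=
        mul_le_mul_of_nonneg_right this hg1t.le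
      rw [div_mul_cancel₀ _ (ne_of_gt hg1t)] at h2
      linarith
    · have := hr ht hφI h
      have h2 : g2 t / g1 t * g1 t ≤ g2 φ / g1 φ * g1 t :=
        mul_le_mul_of_nonneg_right this hg1t.le
      rw [div_mul_cancel₀ _ (ne_of_gt hg1t)] at h2
      nlinarith [mul_nonneg (by linarith : (0:ℝ) ≤ φ - t) (by linarith : (0:ℝ) ≤ c * g1 t - g2 t)]
  have hcont : Continuous fun t : ℝ => (t - φ) * g2 t - c * ((t - φ) * g1 t) := by fun_prop
  have hnn : 0 ≤ ∫ t in a..b, ((t - φ) * g2 t - c * ((t - φ) * g1 t)) :=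
    intervalIntegral.integral_nonneg hab.le hptwise
  have hsplit : (∫ t in a..b, ((t - φ) * g2 t - c * ((t - φ) * g1 t)))
      = (∫ t in a..b, (t - φ) * g2 t) - c * ∫ t in a..b, (t - φ) * g1 t := by
    have hc2 : Continuous fun t : ℝ => (t - φ) * g2 t := by fun_prop
    have hc1 : Continuous fun t : ℝ => c * ((t - φ) * g1 t) := by fun_prop
    rw [intervalIntegral.integral_sub (hc2.intervalIntegrable a b) (hc1.intervalIntegrable a b),
      intervalIntegral.integral_const_mul]
  rw [hsplit, h0] at hnn
  rw [integral_shift_mul hg2 φ] at hnn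
  rw [condMean]
  rw [le_div_iff₀ hI2]
  linarith

lemma condMean_ge_condMean_of_ratio_anti (hg1 : Continuous g1) (hg2 : Continuous g2)
    (hab : a < b) (hpos1 : ∀ t ∈ Icc a b, 0 < g1 t) (hpos2 : ∀ t ∈ Icc a b, 0 < g2 t)
    (hr : AntitoneOn (fun t => g2 t / g1 t) (Icc a b)) :
    condMean g2 a b ≤ condMean g1 a b := by
  set φ := condMean g1 a b with hφ
  have hmem := condMean_mem hg1 hab hpos1
  have hφI : φ ∈ Icc a b := ⟨hmem.1.le, hmem.2.le⟩
  set c := g2 φ / g1 φ with hc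
  have hI1 : 0 < ∫ t in a..b, g1 t := integral_pos_of_pos hg1 hab hpos1
  have hI2 : 0 < ∫ t in a..b, g2 t := integral_pos_of_pos hg2 hab hpos2
  have h0 : (∫ t in a..b, (t - φ) * g1 t) = 0 := by
    rw [integral_shift_mul hg1 φ, hφ, condMean]
    field_simp; ring
  have hptwise : ∀ t ∈ Icc a b, 0 ≤ c * ((t - φ) * g1 t) - (t - φ) * g2 t := by
    intro t ht
    have hkey : c * ((t - φ) * g1 t) - (t - φ) * g2 t = (t - φ) * (c * g1 t - g2 t) := by ring
    rw [hkey]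
    have hg1t := hpos1 t ht
    rcases le_total φ t with h | h
    · apply mul_nonneg (by linarith)
      have := hr hφI ht h
      have h2 : g2 t / g1 t * g1 t ≤ g2 φ / g1 φ * g1 t :=
        mul_le_mul_of_nonneg_right this hg1t.le
      rw [div_mul_cancel₀ _ (ne_of_gt hg1t)] at h2
      linarith
    · have := hr ht hφI h
      have h2 : g2 φ / g1 φ * g1 t ≤ g2 t / g1 t * g1 t :=
        mul_le_mul_of_nonneg_right this hg1t.le
      rw [div_mul_cancel₀ _ (ne_of_gt hg1t)] at h2
      nlinarith [mul_nonneg (by linarith : (0:ℝ) ≤ φ - t) (by linarith : (0:ℝ) ≤ g2 t - c * g1 t)]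
  have hnn : 0 ≤ ∫ t in a..b, (c * ((t - φ) * g1 t) - (t - φ) * g2 t) :=
    intervalIntegral.integral_nonneg hab.le hptwise
  have hsplit : (∫ t in a..b, (c * ((t - φ) * g1 t) - (t - φ) * g2 t))
      = c * (∫ t in a..b, (t - φ) * g1 t) - ∫ t in a..b, (t - φ) * g2 t := by
    have hc2 : Continuous fun t : ℝ => (t - φ) * g2 t := by fun_prop
    have hc1 : Continuous fun t : ℝ => c * ((t - φ) * g1 t) := by fun_prop
    rw [intervalIntegral.integral_sub (hc1.intervalIntegrable a b) (hc2.intervalIntegrable a b),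
      intervalIntegral.integral_const_mul]
  rw [hsplit, h0] at hnn
  rw [integral_shift_mul hg2 φ] at hnn
  rw [condMean, div_le_iff₀ hI2]
  linarith
end M2

section Slide
variable {g : ℝ → ℝ}

lemma fourpoint (hlc : LogConcaveOn01 g) (hpos : ∀ t ∈ Icc (0:ℝ) 1, 0 < g t)
    {P Q X Y : ℝ} (hPX : P ≤ X) (hXQ : X ≤ Q) (hPY : P ≤ Y) (hYQ : Y ≤ Q)
    (hsum : X + Y = P + Q) (hP : P ∈ Icc (0:ℝ) 1) (hQ : Q ∈ Icc (0:ℝ) 1) :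
    g P * g Q ≤ g X * g Y := by
  rcases eq_or_lt_of_le (hPX.trans hXQ) with h | hPQ
  · have hXP : X = P := le_antisymm (by linarith) hPX
    have hYQ' : Y = Q := by linarith
    rw [hXP, hYQ']
  · set l := (Q - X) / (Q - P) with hl
    have hQP : 0 < Q - P := by linarith
    have hl0 : 0 ≤ l := div_nonneg (by linarith) hQP.le
    have hl1 : l ≤ 1 := by rw [hl, div_le_one hQP]; linarith
    have hXeq : l * P + (1 - l) * Q = X := by
      have hlm : l * (Q - P) = Q - X := by rw [hl]; exact div_mul_cancel₀ _ hQP.ne'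
      linear_combination -hlm
    have hYeq : (1 - l) * P + l * Q = Y := by
      have : (1 - l) * P + l * Q = P + Q - (l * P + (1 - l) * Q) := by ring
      rw [this, hXeq]; linarith
    have hX := hlc.2 hP hQ hl0 (by linarith : (0:ℝ) ≤ 1 - l) (by ring)
    have hY := hlc.2 hP hQ (by linarith : (0:ℝ) ≤ 1 - l) hl0 (by ring)
    simp only [smul_eq_mul] at hX hY
    rw [hXeq] at hX
    rw [hYeq] at hY
    have hsum2 : Real.log (g P) + Real.log (g Q) ≤ Real.log (g X) + Real.log (g Y) := by
      linarith
    have hXm : X ∈ Icc (0:ℝ) 1 := ⟨hP.1.trans hPX, hXQ.trans hQ.2⟩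
    have hYm : Y ∈ Icc (0:ℝ) 1 := ⟨hP.1.trans hPY, hYQ.trans hQ.2⟩
    have := Real.exp_le_exp.mpr hsum2
    rwa [Real.exp_add, Real.exp_add, Real.exp_log (hpos P hP), Real.exp_log (hpos Q hQ),
      Real.exp_log (hpos X hXm), Real.exp_log (hpos Y hYm)] at this

lemma ratio_transl_mono (hlc : LogConcaveOn01 g) (hpos : ∀ t ∈ Icc (0:ℝ) 1, 0 < g t)
    {a b c : ℝ} (hc : 0 ≤ c) (h0 : 0 ≤ a - c) (hb1 : b ≤ 1) :
    MonotoneOn (fun t => g (t - c) / g t) (Icc a b) := by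
  intro t ht t' ht' htt'
  simp only
  have hm : ∀ {z : ℝ}, z ∈ Icc a b → z ∈ Icc (0:ℝ) 1 := by
    intro z hz; exact ⟨by linarith [hz.1], hz.2.trans hb1⟩
  have hm' : ∀ {z : ℝ}, z ∈ Icc a b → z - c ∈ Icc (0:ℝ) 1 := by
    intro z hz; exact ⟨by linarith [hz.1], by linarith [hz.2, hm hz]⟩
  have h1 : 0 < g t := hpos _ (hm ht)
  have h2 : 0 < g t' := hpos _ (hm ht')
  rw [div_le_div_iff₀ h1 h2]
  have := fourpoint hlc hpos (P := t - c) (Q := t') (X := t' - c) (Y := t)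
    (by linarith) (by linarith) (by linarith) (by linarith) (by ring)
    (hm' ht) (hm ht')
  linarith [this]

lemma slide_lower (hg : Continuous g) (hlc : LogConcaveOn01 g)
    (hpos : ∀ t ∈ Icc (0:ℝ) 1, 0 < g t) {a b c : ℝ} (hc : 0 ≤ c) (h0 : 0 ≤ a - c)
    (hab : a < b) (hb1 : b ≤ 1) :
    condMean g a b - c ≤ condMean g (a - c) (b - c) := by
  set g2 : ℝ → ℝ := fun t => g (t - c) with hg2def
  have hg2 : Continuous g2 := hg.comp (continuous_id.sub continuous_const)
  have hpos1 : ∀ t ∈ Icc a b, 0 < g t := fun t ht =>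
    hpos t ⟨by linarith [ht.1], ht.2.trans hb1⟩
  have hpos2 : ∀ t ∈ Icc a b, 0 < g2 t := fun t ht =>
    hpos _ ⟨by linarith [ht.1], by linarith [ht.2]⟩
  have hcmp : condMean g a b ≤ condMean g2 a b :=
    condMean_le_condMean_of_ratio_mono hg hg2 hab hpos1 hpos2
      (ratio_transl_mono hlc hpos hc h0 hb1)
  -- condMean g2 a b = condMean g (a-c) (b-c) + c
  have hI : (∫ t in a..b, g2 t) = ∫ t in (a-c)..(b-c), g t :=
    intervalIntegral.integral_comp_sub_right g c
  have hM : (∫ t in a..b, t * g2 t)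
      = (∫ t in (a-c)..(b-c), t * g t) + c * ∫ t in (a-c)..(b-c), g t := by
    have h1 : (∫ t in a..b, t * g2 t) = ∫ t in a..b, (fun u => (u + c) * g u) (t - c) := by
      congr 1; ext t
      show t * g (t - c) = (t - c + c) * g (t - c)
      ring
    rw [h1, intervalIntegral.integral_comp_sub_right (fun u => (u + c) * g u) c]
    have h2 : (∫ t in (a-c)..(b-c), (t + c) * g t)
        = (∫ t in (a-c)..(b-c), ((fun t => t * g t) t + (fun t => c * g t) t)) := by
      congr 1; ext t; ring
    have hc1 : Continuous fun t : ℝ => t * g t := by fun_prop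
    have hc2 : Continuous fun t : ℝ => c * g t := by fun_prop
    rw [h2, intervalIntegral.integral_add (hc1.intervalIntegrable _ _)
      (hc2.intervalIntegrable _ _), intervalIntegral.integral_const_mul]
  have hposl : ∀ t ∈ Icc (a-c) (b-c), 0 < g t := fun t ht =>
    hpos t ⟨by linarith [ht.1], by linarith [ht.2]⟩
  have hIl : 0 < ∫ t in (a-c)..(b-c), g t :=
    integral_pos_of_pos hg (by linarith) hposl
  have : condMean g2 a b = condMean g (a-c) (b-c) + c := by
    rw [condMean, condMean, hI, hM]
    field_simp
  linarith [hcmp, this ▸ hcmp]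
end Slide

section CoreMin
variable {g : ℝ → ℝ} {a b a' b' : ℝ}

lemma pos_restrict (hpos : ∀ t ∈ Icc (0:ℝ) 1, 0 < g t) {lo hi : ℝ} (h0 : 0 ≤ lo) (h1 : hi ≤ 1) :
    ∀ t ∈ Icc lo hi, 0 < g t := fun t ht => hpos t ⟨h0.trans ht.1, ht.2.trans h1⟩

lemma core_min_aux1 (hg : Continuous g) (hlc : LogConcaveOn01 g)
    (hpos : ∀ t ∈ Icc (0:ℝ) 1, 0 < g t)
    (ha : 0 ≤ a) (hab : a < b) (hb : b ≤ 1)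
    (ha' : 0 ≤ a') (hab' : a' < b') (hb' : b' ≤ 1)
    (hc : a' - a ≤ b' - b) :
    condMean g a b + min (a' - a) 0 ≤ condMean g a' (b + (a' - a)) ∧
      condMean g a' (b + (a' - a)) ≤ condMean g a' b' := by
  have hba : b + (a' - a) ≤ b' := by linarith
  have hone : b + (a' - a) ≤ 1 := hba.trans hb'
  constructor
  · rcases le_total 0 (a' - a) with h | h
    · have e2 : condMean g a b ≤ condMean g a (b + (a' - a)) :=
        condMean_le_right hg hab (by linarith) (pos_restrict hpos ha hone)
      have e1 : condMean g a (b + (a' - a)) ≤ condMean g a' (b + (a' - a)) :=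
        condMean_le_left hg (by linarith) (by linarith) (pos_restrict hpos ha hone)
      have hm : min (a' - a) 0 = 0 := min_eq_right h
      rw [hm]; linarith
    · have e1 : condMean g a b - (-(a' - a)) ≤ condMean g (a - (-(a' - a))) (b - (-(a' - a))) :=
        slide_lower hg hlc hpos (by linarith) (by linarith) hab hb
      have e2 : a - (-(a' - a)) = a' := by ring
      have e3 : b - (-(a' - a)) = b + (a' - a) := by ring
      rw [e2, e3] at e1
      have hm : min (a' - a) 0 = a' - a := min_eq_left h
      rw [hm]; linarith
  · exact condMean_le_right hg (by linarith) hba (pos_restrict hpos ha' hb')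

lemma core_min_aux2 (hg : Continuous g) (hlc : LogConcaveOn01 g)
    (hpos : ∀ t ∈ Icc (0:ℝ) 1, 0 < g t)
    (ha : 0 ≤ a) (hab : a < b) (hb : b ≤ 1)
    (ha' : 0 ≤ a') (hab' : a' < b') (hb' : b' ≤ 1)
    (hc : b' - b ≤ a' - a) :
    (condMean g a b + min (b' - b) 0 ≤ condMean g a' b') ∧
      (a' - a ≠ b' - b → condMean g a b + min (b' - b) 0 < condMean g a' b') := by
  rcases le_total 0 (b' - b) with h | h
  · have e2 : condMean g a b ≤ condMean g a b' :=
      condMean_le_right hg hab (by linarith) (pos_restrict hpos ha hb')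
    have e1 : condMean g a b' ≤ condMean g a' b' :=
      condMean_le_left hg (by linarith) hab' (pos_restrict hpos ha hb')
    have hm : min (b' - b) 0 = 0 := min_eq_right h
    constructor
    · rw [hm]; linarith
    · intro hne
      have haa' : a < a' := by
        rcases lt_or_eq_of_le (by linarith : a ≤ a') with h2 | h2
        · exact h2
        · exfalso; exact hne (by linarith)
      have e1' : condMean g a b' < condMean g a' b' :=
        condMean_lt_left hg haa' hab' (pos_restrict hpos ha hb')
      rw [hm]; linarith
  · have hm : min (b' - b) 0 = b' - b := min_eq_left h
    rcases le_or_gt 0 (a + (b' - b)) with h2 | h2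
    · have e1 : condMean g (a + (b' - b)) b' ≤ condMean g a' b' :=
        condMean_le_left hg (by linarith) hab' (pos_restrict hpos h2 hb')
      have e1s : a + (b' - b) < a' → condMean g (a + (b' - b)) b' < condMean g a' b' :=
        fun hlt => condMean_lt_left hg hlt hab' (pos_restrict hpos h2 hb')
      have e2 : condMean g a b + (b' - b) ≤ condMean g (a + (b' - b)) b' := by
        have hsl := slide_lower hg hlc hpos (a := a) (b := b) (c := -(b' - b))
          (by linarith) (by linarith) hab hb
        have r1 : a - -(b' - b) = a + (b' - b) := by ring
        have r2 : b - -(b' - b) = b' := by ring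
        rw [r1, r2] at hsl
        linarith
      constructor
      · rw [hm]; linarith
      · intro hne
        have hlt : a + (b' - b) < a' := by
          rcases lt_or_eq_of_le (by linarith : a + (b' - b) ≤ a') with h3 | h3
          · exact h3
          · exfalso; exact hne (by linarith)
        rw [hm]; linarith [e1s hlt]
    · have hb'pos : 0 < b' := lt_of_le_of_lt ha' hab'
      have e1 : condMean g 0 b' ≤ condMean g a' b' :=
        condMean_le_left hg ha' hab' (pos_restrict hpos le_rfl hb')
      have e2 : condMean g (b - b') b - (b - b') ≤ condMean g 0 b' := by
        have hsl := slide_lower hg hlc hpos (a := b - b') (b := b) (c := b - b')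
          (by linarith) (by linarith) (by linarith) hb
        have r1 : b - b' - (b - b') = 0 := by ring
        have r2 : b - (b - b') = b' := by ring
        rw [r1, r2] at hsl
        exact hsl
      have e3 : condMean g a b < condMean g (b - b') b :=
        condMean_lt_left hg (by linarith) (by linarith) (pos_restrict hpos ha hb)
      constructor
      · rw [hm]; linarith
      · intro _; rw [hm]; linarith

lemma core_min (hg : Continuous g) (hlc : LogConcaveOn01 g)
    (hpos : ∀ t ∈ Icc (0:ℝ) 1, 0 < g t)
    (ha : 0 ≤ a) (hab : a < b) (hb : b ≤ 1)
    (ha' : 0 ≤ a') (hab' : a' < b') (hb' : b' ≤ 1) :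
    condMean g a b + min (a' - a) (min (b' - b) 0) ≤ condMean g a' b' := by
  have hm1 : min (a' - a) (min (b' - b) 0) ≤ min (a' - a) 0 := by
    simp only [le_min_iff]
    exact ⟨min_le_left _ _, (min_le_right _ _).trans (min_le_right _ _)⟩
  have hm2 : min (a' - a) (min (b' - b) 0) ≤ min (b' - b) 0 := min_le_right _ _
  rcases le_total (a' - a) (b' - b) with hc | hc
  · have h := core_min_aux1 hg hlc hpos ha hab hb ha' hab' hb' hc
    linarith [h.1, h.2]
  · have h := (core_min_aux2 hg hlc hpos ha hab hb ha' hab' hb' hc).1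
    linarith

lemma core_min_strict (hg : Continuous g) (hlc : LogConcaveOn01 g)
    (hpos : ∀ t ∈ Icc (0:ℝ) 1, 0 < g t)
    (ha : 0 ≤ a) (hab : a < b) (hb : b ≤ 1)
    (ha' : 0 ≤ a') (hab' : a' < b') (hb' : b' ≤ 1) (hne : a' - a ≠ b' - b) :
    condMean g a b + min (a' - a) (min (b' - b) 0) < condMean g a' b' := by
  have hm1 : min (a' - a) (min (b' - b) 0) ≤ min (a' - a) 0 := by
    simp only [le_min_iff]
    exact ⟨min_le_left _ _, (min_le_right _ _).trans (min_le_right _ _)⟩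
  have hm2 : min (a' - a) (min (b' - b) 0) ≤ min (b' - b) 0 := min_le_right _ _
  rcases lt_or_ge (a' - a) (b' - b) with hc | hc
  · have h := core_min_aux1 hg hlc hpos ha hab hb ha' hab' hb' hc.le
    have hstrict : condMean g a' (b + (a' - a)) < condMean g a' b' :=
      condMean_lt_right hg (by linarith) (by linarith) (pos_restrict hpos ha' hb')
    linarith [h.1]
  · have h := (core_min_aux2 hg hlc hpos ha hab hb ha' hab' hb' hc).2 hne
    linarith

lemma core_max (hg : Continuous g) (hlc : LogConcaveOn01 g)
    (hpos : ∀ t ∈ Icc (0:ℝ) 1, 0 < g t)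
    (ha : 0 ≤ a) (hab : a < b) (hb : b ≤ 1)
    (ha' : 0 ≤ a') (hab' : a' < b') (hb' : b' ≤ 1) :
    condMean g a' b' ≤ condMean g a b + max (a' - a) (max (b' - b) 0) := by
  have h := core_min hg hlc hpos ha' hab' hb' ha hab hb
  have hneg : min (a - a') (min (b - b') 0) = - max (a' - a) (max (b' - b) 0) := by
    rcases le_total (a' - a) (b' - b) with h1 | h1 <;> rcases le_total (b' - b) 0 with h2 | h2 <;>
      rcases le_total (a' - a) 0 with h3 | h3 <;>
      simp [min_def, max_def] <;> split_ifs <;> linarith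
  rw [hneg] at h
  linarith

lemma core_max_strict (hg : Continuous g) (hlc : LogConcaveOn01 g)
    (hpos : ∀ t ∈ Icc (0:ℝ) 1, 0 < g t)
    (ha : 0 ≤ a) (hab : a < b) (hb : b ≤ 1)
    (ha' : 0 ≤ a') (hab' : a' < b') (hb' : b' ≤ 1) (hne : a' - a ≠ b' - b) :
    condMean g a' b' < condMean g a b + max (a' - a) (max (b' - b) 0) := by
  have h := core_min_strict hg hlc hpos ha' hab' hb' ha hab hb
    (fun hcon => hne (by linarith))
  have hneg : min (a - a') (min (b - b') 0) = - max (a' - a) (max (b' - b) 0) := by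
    rcases le_total (a' - a) (b' - b) with h1 | h1 <;> rcases le_total (b' - b) 0 with h2 | h2 <;>
      rcases le_total (a' - a) 0 with h3 | h3 <;>
      simp [min_def, max_def] <;> split_ifs <;> linarith
  rw [hneg] at h
  linarith
end CoreMin

section Windows

lemma window_left_principle (D E : ℕ → ℝ) (a : ℕ)
    (hE0 : E 0 = 0) (ha1 : 1 ≤ a) (hDa : D a < 0) (hDa1 : 0 ≤ D (a+1))
    (hφw : ∀ l, 1 ≤ l → l ≤ a → min (E (l-1)) (min (E l) 0) ≤ D l)
    (hφs : ∀ l, 1 ≤ l → l ≤ a → E (l-1) ≠ E l → min (E (l-1)) (min (E l) 0) < D l)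
    (hμw : ∀ l, 1 ≤ l → l ≤ a → min (D l) (min (D (l+1)) 0) ≤ E l)
    (hμs : ∀ l, 1 ≤ l → l ≤ a → D l ≠ D (l+1) → min (D l) (min (D (l+1)) 0) < E l) :
    False := by
  classical
  set F : Finset ℝ := ((Finset.Icc 1 a).image D) ∪ ((Finset.Icc 0 a).image E) with hF
  have hne : F.Nonempty := by
    refine ⟨D a, ?_⟩
    simp only [hF, Finset.mem_union, Finset.mem_image]
    exact Or.inl ⟨a, Finset.mem_Icc.mpr ⟨ha1, le_refl a⟩, rfl⟩
  set m := F.min' hne with hm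
  have hmD : ∀ l, 1 ≤ l → l ≤ a → m ≤ D l := by
    intro l h1 h2
    apply Finset.min'_le
    simp only [hF, Finset.mem_union, Finset.mem_image]
    exact Or.inl ⟨l, Finset.mem_Icc.mpr ⟨h1, h2⟩, rfl⟩
  have hmE : ∀ l, l ≤ a → m ≤ E l := by
    intro l h2
    apply Finset.min'_le
    simp only [hF, Finset.mem_union, Finset.mem_image]
    exact Or.inr ⟨l, Finset.mem_Icc.mpr ⟨Nat.zero_le l, h2⟩, rfl⟩
  have hmneg : m < 0 := lt_of_le_of_lt (hmD a ha1 le_rfl) hDa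
  have stepD : ∀ l, 1 ≤ l → l ≤ a → m < E (l-1) → m < D l := by
    intro l h1 h2 hEl
    rcases eq_or_lt_of_le (hmE l h2) with h | h
    · have hne' : E (l-1) ≠ E l := by rw [← h]; exact (ne_of_gt hEl)
      have hstrict := hφs l h1 h2 hne'
      have hmin : min (E (l-1)) (min (E l) 0) = m := by
        rw [← h, min_eq_left (le_of_lt hmneg), min_eq_right (le_of_lt hEl)]
      rw [hmin] at hstrict; exact hstrict
    · have hweak := hφw l h1 h2
      have hmin : m < min (E (l-1)) (min (E l) 0) := by
        simp only [lt_min_iff]; exact ⟨hEl, h, hmneg⟩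
      linarith
  have stepE : ∀ l, 1 ≤ l → l ≤ a → m < D l → m < E l := by
    intro l h1 h2 hDl
    by_cases hcase : l = a
    · have hD1 : 0 ≤ D (l+1) := by rw [hcase]; exact hDa1
      have hweak := hμw l h1 h2
      have hmin : m < min (D l) (min (D (l+1)) 0) := by
        simp only [lt_min_iff]; exact ⟨hDl, lt_of_lt_of_le hmneg hD1, hmneg⟩
      linarith
    · have hla : l + 1 ≤ a := by omega
      rcases eq_or_lt_of_le (hmD (l+1) (by omega) hla) with h | h
      · have hne' : D l ≠ D (l+1) := by rw [← h]; exact (ne_of_gt hDl)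
        have hstrict := hμs l h1 h2 hne'
        have hmin : min (D l) (min (D (l+1)) 0) = m := by
          rw [← h, min_eq_left (le_of_lt hmneg), min_eq_right (le_of_lt hDl)]
        rw [hmin] at hstrict; exact hstrict
      · have hweak := hμw l h1 h2
        have hmin : m < min (D l) (min (D (l+1)) 0) := by
          simp only [lt_min_iff]; exact ⟨hDl, h, hmneg⟩
        linarith
  have hEall : ∀ l, l ≤ a → m < E l := by
    intro l
    induction l with
    | zero => intro _; rw [hE0]; exact hmneg
    | succ n ih =>
      intro hla
      have hEn : m < E n := ih (by omega)
      have hEn' : m < E ((n+1) - 1) := by simpa using hEn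
      have hDn1 : m < D (n+1) := stepD (n+1) (by omega) hla hEn'
      exact stepE (n+1) (by omega) hla hDn1
  have hDall : ∀ l, 1 ≤ l → l ≤ a → m < D l := by
    intro l h1 h2
    exact stepD l h1 h2 (hEall (l-1) (by omega))
  have hmem := Finset.min'_mem F hne
  rw [← hm] at hmem
  simp only [hF, Finset.mem_union, Finset.mem_image] at hmem
  rcases hmem with ⟨l, hl, hval⟩ | ⟨l, hl, hval⟩
  · rw [Finset.mem_Icc] at hl
    exact absurd hval (ne_of_gt (hDall l hl.1 hl.2))
  · rw [Finset.mem_Icc] at hl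
    exact absurd hval (ne_of_gt (hEall l hl.2))

lemma window_right_principle (D E : ℕ → ℝ) (b N : ℕ)
    (hEN : E N = 0) (hb1 : 1 ≤ b) (hbN : b ≤ N) (hDb : 0 < D b) (hDbm : D (b-1) ≤ 0)
    (hφw : ∀ l, b ≤ l → l ≤ N → D l ≤ max (E (l-1)) (max (E l) 0))
    (hφs : ∀ l, b ≤ l → l ≤ N → E (l-1) ≠ E l → D l < max (E (l-1)) (max (E l) 0))
    (hμw : ∀ l, b - 1 ≤ l → l ≤ N - 1 → E l ≤ max (D l) (max (D (l+1)) 0))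
    (hμs : ∀ l, b - 1 ≤ l → l ≤ N - 1 → D l ≠ D (l+1) → E l < max (D l) (max (D (l+1)) 0)) :
    False := by
  classical
  set F : Finset ℝ := ((Finset.Icc b N).image D) ∪ ((Finset.Icc (b-1) N).image E) with hF
  have hne : F.Nonempty := by
    refine ⟨D b, ?_⟩
    simp only [hF, Finset.mem_union, Finset.mem_image]
    exact Or.inl ⟨b, Finset.mem_Icc.mpr ⟨le_refl b, hbN⟩, rfl⟩
  set M := F.max' hne with hM
  have hMD : ∀ l, b ≤ l → l ≤ N → D l ≤ M := by
    intro l h1 h2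
    apply Finset.le_max'
    simp only [hF, Finset.mem_union, Finset.mem_image]
    exact Or.inl ⟨l, Finset.mem_Icc.mpr ⟨h1, h2⟩, rfl⟩
  have hME : ∀ l, b - 1 ≤ l → l ≤ N → E l ≤ M := by
    intro l h1 h2
    apply Finset.le_max'
    simp only [hF, Finset.mem_union, Finset.mem_image]
    exact Or.inr ⟨l, Finset.mem_Icc.mpr ⟨h1, h2⟩, rfl⟩
  have hMpos : 0 < M := lt_of_lt_of_le hDb (hMD b le_rfl hbN)
  have stepD : ∀ l, b ≤ l → l ≤ N → E l < M → D l < M := by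
    intro l h1 h2 hEl
    rcases eq_or_lt_of_le (hME (l-1) (by omega) (by omega)) with h | h
    · have hne' : E (l-1) ≠ E l := by rw [h]; exact (ne_of_gt hEl)
      have hstrict := hφs l h1 h2 hne'
      have hmax : max (E (l-1)) (max (E l) 0) = M := by
        rw [h, max_eq_left]
        exact max_le (le_of_lt hEl) (le_of_lt hMpos)
      rw [hmax] at hstrict; exact hstrict
    · have hweak := hφw l h1 h2
      have hmax : max (E (l-1)) (max (E l) 0) < M := by
        simp only [max_lt_iff]; exact ⟨h, hEl, hMpos⟩
      linarith
  have stepE : ∀ l, b - 1 ≤ l → l ≤ N - 1 → D (l+1) < M → E l < M := by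
    intro l h1 h2 hDl1
    by_cases hcase : l = b - 1
    · have hDl : D l ≤ 0 := by rw [hcase]; exact hDbm
      have hweak := hμw l h1 h2
      have hmax : max (D l) (max (D (l+1)) 0) < M := by
        simp only [max_lt_iff]; exact ⟨lt_of_le_of_lt hDl hMpos, hDl1, hMpos⟩
      linarith
    · have hlb : b ≤ l := by omega
      rcases eq_or_lt_of_le (hMD l hlb (by omega)) with h | h
      · have hne' : D l ≠ D (l+1) := by rw [h]; exact (ne_of_gt hDl1)
        have hstrict := hμs l h1 h2 hne'
        have hmax : max (D l) (max (D (l+1)) 0) = M := by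
          rw [h, max_eq_left]
          exact max_le (le_of_lt hDl1) (le_of_lt hMpos)
        rw [hmax] at hstrict; exact hstrict
      · have hweak := hμw l h1 h2
        have hmax : max (D l) (max (D (l+1)) 0) < M := by
          simp only [max_lt_iff]; exact ⟨h, hDl1, hMpos⟩
        linarith
  -- downward induction on N - l
  have hEall : ∀ k l, b - 1 ≤ l → l ≤ N → N - l ≤ k → E l < M := by
    intro k
    induction k with
    | zero =>
      intro l h1 h2 h3
      have : l = N := by omega
      rw [this, hEN]; exact hMpos
    | succ n ih =>
      intro l h1 h2 h3
      by_cases hc : N - l ≤ n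
      · exact ih l h1 h2 hc
      · have hlN : l < N := by omega
        have hE1 : E (l+1) < M := ih (l+1) (by omega) (by omega) (by omega)
        have hD1 : D (l+1) < M := stepD (l+1) (by omega) (by omega) hE1
        exact stepE l h1 (by omega) hD1
  have hEall' : ∀ l, b - 1 ≤ l → l ≤ N → E l < M := fun l h1 h2 =>
    hEall (N - l) l h1 h2 le_rfl
  have hDall : ∀ l, b ≤ l → l ≤ N → D l < M := fun l h1 h2 =>
    stepD l h1 h2 (hEall' l (by omega) h2)
  have hmem := Finset.max'_mem F hne
  rw [← hM] at hmem
  simp only [hF, Finset.mem_union, Finset.mem_image] at hmem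
  rcases hmem with ⟨l, hl, hval⟩ | ⟨l, hl, hval⟩
  · rw [Finset.mem_Icc] at hl
    exact absurd hval (ne_of_lt (hDall l hl.1 hl.2))
  · rw [Finset.mem_Icc] at hl
    exact absurd hval (ne_of_lt (hEall' l hl.1 hl.2))
end Windows

/-- comparative statics under the uniform conditional variability order:
the new interleaved vector crosses the old one at most once and from above. -/
theorem stmt_8 (f fhat u : ℝ → ℝ) (N : ℕ) (hN : 2 ≤ N)
    (hf_cont : Continuous f) (hf_pos : ∀ t ∈ Icc (0:ℝ) 1, 0 < f t)
    (hf_prob : (∫ t in (0:ℝ)..1, f t) = 1)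
    (hfhat_cont : Continuous fhat) (hfhat_pos : ∀ t ∈ Icc (0:ℝ) 1, 0 < fhat t)
    (hfhat_prob : (∫ t in (0:ℝ)..1, fhat t) = 1)
    (hu : ContDiff ℝ 2 u)
    (hu'' : ∀ t ∈ Icc (0:ℝ) 1, 0 < deriv (deriv u) t)
    (hf_lc : LogConcaveOn01 f) (hfhat_lc : LogConcaveOn01 fhat)
    (hu_lc : LogConcaveOn01 (deriv (deriv u)))
    (p : ℝ) (hp : p ∈ Icc (0:ℝ) 1)
    (hup : MonotoneOn (fun t => fhat t / f t) (Icc 0 p))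
    (hdown : AntitoneOn (fun t => fhat t / f t) (Icc p 1))
    (s x shat xhat : ℕ → ℝ)
    (h1 : DualSystem f (deriv (deriv u)) N s x)
    (h2 : DualSystem fhat (deriv (deriv u)) N shat xhat) :
    ∃ nstar ≤ 2 * N - 1, ∀ j, 1 ≤ j → j ≤ 2 * N - 1 →
      (j ≤ nstar → zvec s x j ≤ zvec shat xhat j) ∧
      (nstar < j → zvec shat xhat j ≤ zvec s x j) := by
  classical
  have hw_cont : Continuous (deriv (deriv u)) := by
    have h0 : ContDiff ℝ ((1:ℕ∞)+1) u := by exact_mod_cast hu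
    have h1' : ContDiff ℝ 1 (deriv u) := (contDiff_succ_iff_deriv.mp h0).2.2
    have h2' : ContDiff ℝ ((0:ℕ∞)+1) (deriv u) := by exact_mod_cast h1'
    exact (contDiff_succ_iff_deriv.mp h2').2.2.continuous
  set w := deriv (deriv u) with hwdef
  obtain ⟨hs0, hsN, hsmono, hsx, hsmu⟩ := h1
  obtain ⟨ht0, htN, htmono, htx, htmu⟩ := h2
  -- chain monotonicity
  have chain_le : ∀ (σ : ℕ → ℝ), (∀ k < N, σ k < σ (k+1)) →
      ∀ k l, k ≤ l → l ≤ N → σ k ≤ σ l := by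
    intro σ hσ k l hkl hlN
    induction l with
    | zero => have hk0 : k = 0 := by omega
              rw [hk0]
    | succ n ih =>
      rcases Nat.lt_or_ge k (n+1) with h | h
      · have e1 : σ k ≤ σ n := ih (by omega) (by omega)
        have e2 : σ n < σ (n+1) := hσ n (by omega)
        linarith
      · have hk : k = n+1 := by omega
        rw [hk]
  have hs_lb : ∀ k, k ≤ N → 0 ≤ s k := by
    intro k hk; rw [← hs0]; exact chain_le s hsmono 0 k (by omega) hk
  have hs_ub : ∀ k, k ≤ N → s k ≤ 1 := by
    intro k hk; rw [← hsN]; exact chain_le s hsmono k N hk le_rfl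
  have ht_lb : ∀ k, k ≤ N → 0 ≤ shat k := by
    intro k hk; rw [← ht0]; exact chain_le shat htmono 0 k (by omega) hk
  have ht_ub : ∀ k, k ≤ N → shat k ≤ 1 := by
    intro k hk; rw [← htN]; exact chain_le shat htmono k N hk le_rfl
  have hs_lt : ∀ k, 1 ≤ k → k ≤ N → s (k-1) < s k := by
    intro k hk1 hk
    have h := hsmono (k-1) (by omega)
    rwa [Nat.sub_add_cancel hk1] at h
  have ht_lt : ∀ k, 1 ≤ k → k ≤ N → shat (k-1) < shat k := by
    intro k hk1 hk
    have h := htmono (k-1) (by omega)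
    rwa [Nat.sub_add_cancel hk1] at h
  -- x inside intervals
  have hx_mem : ∀ k, 1 ≤ k → k ≤ N → s (k-1) < x k ∧ x k < s k := by
    intro k hk1 hk
    rw [hsx k hk1 hk]
    exact condMean_mem hf_cont (hs_lt k hk1 hk)
      (pos_restrict hf_pos (hs_lb _ (by omega)) (hs_ub _ hk))
  have hxh_mem : ∀ k, 1 ≤ k → k ≤ N → shat (k-1) < xhat k ∧ xhat k < shat k := by
    intro k hk1 hk
    rw [htx k hk1 hk]
    exact condMean_mem hfhat_cont (ht_lt k hk1 hk)
      (pos_restrict hfhat_pos (ht_lb _ (by omega)) (ht_ub _ hk))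
  have hx_lb : ∀ k, 1 ≤ k → k ≤ N → 0 ≤ x k := fun k hk1 hk =>
    (hs_lb (k-1) (by omega)).trans (hx_mem k hk1 hk).1.le
  have hx_ub : ∀ k, 1 ≤ k → k ≤ N → x k ≤ 1 := fun k hk1 hk =>
    (hx_mem k hk1 hk).2.le.trans (hs_ub k hk)
  have hxh_lb : ∀ k, 1 ≤ k → k ≤ N → 0 ≤ xhat k := fun k hk1 hk =>
    (ht_lb (k-1) (by omega)).trans (hxh_mem k hk1 hk).1.le
  have hxh_ub : ∀ k, 1 ≤ k → k ≤ N → xhat k ≤ 1 := fun k hk1 hk =>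
    (hxh_mem k hk1 hk).2.le.trans (ht_ub k hk)
  have hx_lt : ∀ k, 1 ≤ k → k + 1 ≤ N → x k < x (k+1) := by
    intro k hk1 hk
    have e1 := (hx_mem k hk1 (by omega)).2
    have e2 := (hx_mem (k+1) (by omega) hk).1
    simp only [Nat.add_sub_cancel] at e2
    linarith
  have hxh_lt : ∀ k, 1 ≤ k → k + 1 ≤ N → xhat k < xhat (k+1) := by
    intro k hk1 hk
    have e1 := (hxh_mem k hk1 (by omega)).2
    have e2 := (hxh_mem (k+1) (by omega) hk).1
    simp only [Nat.add_sub_cancel] at e2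
    linarith
  -- the two μ-side inequality packs (no p needed)
  have hμ_min : ∀ l, 1 ≤ l → l ≤ N - 1 →
      min (xhat l - x l) (min (xhat (l+1) - x (l+1)) 0) ≤ shat l - s l ∧
      (xhat l - x l ≠ xhat (l+1) - x (l+1) →
        min (xhat l - x l) (min (xhat (l+1) - x (l+1)) 0) < shat l - s l) := by
    intro l h1 hl
    have hlN : l ≤ N := by omega
    have hl1N : l + 1 ≤ N := by omega
    have b1 := core_min hw_cont hu_lc hu'' (hx_lb l h1 hlN) (hx_lt l h1 hl1N)
      (hx_ub (l+1) (by omega) hl1N) (hxh_lb l h1 hlN) (hxh_lt l h1 hl1N)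
      (hxh_ub (l+1) (by omega) hl1N)
    have b2 := fun hne => core_min_strict hw_cont hu_lc hu'' (hx_lb l h1 hlN)
      (hx_lt l h1 hl1N) (hx_ub (l+1) (by omega) hl1N) (hxh_lb l h1 hlN)
      (hxh_lt l h1 hl1N) (hxh_ub (l+1) (by omega) hl1N) hne
    rw [← hsmu l h1 hl, ← htmu l h1 hl] at b1 b2
    exact ⟨by linarith, fun hne => by linarith [b2 hne]⟩
  have hμ_max : ∀ l, 1 ≤ l → l ≤ N - 1 →
      shat l - s l ≤ max (xhat l - x l) (max (xhat (l+1) - x (l+1)) 0) ∧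
      (xhat l - x l ≠ xhat (l+1) - x (l+1) →
        shat l - s l < max (xhat l - x l) (max (xhat (l+1) - x (l+1)) 0)) := by
    intro l h1 hl
    have hlN : l ≤ N := by omega
    have hl1N : l + 1 ≤ N := by omega
    have b1 := core_max hw_cont hu_lc hu'' (hx_lb l h1 hlN) (hx_lt l h1 hl1N)
      (hx_ub (l+1) (by omega) hl1N) (hxh_lb l h1 hlN) (hxh_lt l h1 hl1N)
      (hxh_ub (l+1) (by omega) hl1N)
    have b2 := fun hne => core_max_strict hw_cont hu_lc hu'' (hx_lb l h1 hlN)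
      (hx_lt l h1 hl1N) (hx_ub (l+1) (by omega) hl1N) (hxh_lb l h1 hlN)
      (hxh_lt l h1 hl1N) (hxh_ub (l+1) (by omega) hl1N) hne
    rw [← hsmu l h1 hl, ← htmu l h1 hl] at b1 b2
    exact ⟨by linarith, fun hne => by linarith [b2 hne]⟩
  -- main contradiction
  by_contra hcon
  push_neg at hcon
  have hQ0 : ∀ j, 1 ≤ j → j ≤ 0 → zvec s x j ≤ zvec shat xhat j := by
    intro j hj1 hj0; omega
  have hnotall : ¬(∀ j, 1 ≤ j → j ≤ 2*N-1 → zvec s x j ≤ zvec shat xhat j) := by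
    intro hall
    obtain ⟨j0, hj01, hj02, hj0v⟩ := hcon (2*N-1) le_rfl
    have hbad := hj0v (fun _ => hall j0 hj01 hj02)
    exact absurd hbad.1 (by omega)
  have hexm : ∃ m, ¬(∀ j, 1 ≤ j → j ≤ m → zvec s x j ≤ zvec shat xhat j) := ⟨2*N-1, hnotall⟩
  set m0 := Nat.find hexm with hm0def
  have hm0spec : ¬(∀ j, 1 ≤ j → j ≤ m0 → zvec s x j ≤ zvec shat xhat j) := Nat.find_spec hexm
  have hm0min : ∀ l, l < m0 → ∀ j, 1 ≤ j → j ≤ l → zvec s x j ≤ zvec shat xhat j :=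
    fun l hl => not_not.mp (Nat.find_min hexm hl)
  have hm0pos : 1 ≤ m0 := by
    by_contra hc
    push_neg at hc
    have hz : m0 = 0 := by omega
    exact hm0spec (by rw [hz]; exact hQ0)
  have hm0le : m0 ≤ 2*N-1 := Nat.find_min' hexm hnotall
  push_neg at hm0spec
  obtain ⟨i0, hi01, hi02, hi0v⟩ := hm0spec
  obtain ⟨j0, hj01, hj02, hj0v⟩ := hcon (m0-1) (by omega)
  have hupj : m0 - 1 < j0 ∧ zvec s x j0 < zvec shat xhat j0 :=
    hj0v (fun hj => hm0min (m0-1) (by omega) j0 hj01 hj)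
  have hij : i0 < j0 := by
    have hne : i0 ≠ j0 := fun h => by rw [h] at hi0v; linarith [hupj.2]
    have h3 := hupj.1
    omega
  have hi0r : i0 ≤ 2*N-1 := by omega
  -- extraction to x-crossing
  have extract_down : ∀ i, 1 ≤ i → i ≤ 2*N-1 → zvec shat xhat i < zvec s x i →
      ∃ A, 1 ≤ A ∧ A ≤ N ∧ 2*A ≤ i + 2 ∧ xhat A < x A := by
    intro i hi1 hi2 hlt
    by_cases hpar : i % 2 = 1
    · refine ⟨(i+1)/2, by omega, by omega, by omega, ?_⟩
      have e1 : zvec s x i = x ((i+1)/2) := by simp [zvec, hpar]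
      have e2 : zvec shat xhat i = xhat ((i+1)/2) := by simp [zvec, hpar]
      rw [e1, e2] at hlt; exact hlt
    · have hpar0 : i % 2 = 0 := by omega
      have hk1 : 1 ≤ i/2 := by omega
      have hkN : i/2 ≤ N - 1 := by omega
      have e1 : zvec s x i = s (i/2) := by simp [zvec, hpar0]
      have e2 : zvec shat xhat i = shat (i/2) := by simp [zvec, hpar0]
      rw [e1, e2] at hlt
      by_cases hxk : xhat (i/2) < x (i/2)
      · exact ⟨i/2, hk1, by omega, by omega, hxk⟩
      · push_neg at hxk
        refine ⟨i/2 + 1, by omega, by omega, by omega, ?_⟩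
        by_contra hcon2
        push_neg at hcon2
        have c1 : condMean w (x (i/2)) (x (i/2+1)) ≤ condMean w (x (i/2)) (xhat (i/2+1)) :=
          condMean_le_right hw_cont (hx_lt (i/2) hk1 (by omega)) hcon2
            (pos_restrict hu'' (hx_lb (i/2) hk1 (by omega)) (hxh_ub (i/2+1) (by omega) (by omega)))
        have c2 : condMean w (x (i/2)) (xhat (i/2+1)) ≤ condMean w (xhat (i/2)) (xhat (i/2+1)) :=
          condMean_le_left hw_cont hxk (hxh_lt (i/2) hk1 (by omega))
            (pos_restrict hu'' (hx_lb (i/2) hk1 (by omega)) (hxh_ub (i/2+1) (by omega) (by omega)))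
        rw [← hsmu (i/2) hk1 hkN, ← htmu (i/2) hk1 hkN] at *
        linarith
  have extract_up : ∀ j, 1 ≤ j → j ≤ 2*N-1 → zvec s x j < zvec shat xhat j →
      ∃ B, 1 ≤ B ∧ B ≤ N ∧ j ≤ 2*B ∧ x B < xhat B := by
    intro j hj1 hj2 hlt
    by_cases hpar : j % 2 = 1
    · refine ⟨(j+1)/2, by omega, by omega, by omega, ?_⟩
      have e1 : zvec s x j = x ((j+1)/2) := by simp [zvec, hpar]
      have e2 : zvec shat xhat j = xhat ((j+1)/2) := by simp [zvec, hpar]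
      rw [e1, e2] at hlt; exact hlt
    · have hpar0 : j % 2 = 0 := by omega
      have hk1 : 1 ≤ j/2 := by omega
      have hkN : j/2 ≤ N - 1 := by omega
      have e1 : zvec s x j = s (j/2) := by simp [zvec, hpar0]
      have e2 : zvec shat xhat j = shat (j/2) := by simp [zvec, hpar0]
      rw [e1, e2] at hlt
      by_cases hxk : x (j/2+1) < xhat (j/2+1)
      · exact ⟨j/2 + 1, by omega, by omega, by omega, hxk⟩
      · push_neg at hxk
        refine ⟨j/2, hk1, by omega, by omega, ?_⟩
        by_contra hcon2
        push_neg at hcon2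
        have c1 : condMean w (xhat (j/2)) (xhat (j/2+1)) ≤ condMean w (xhat (j/2)) (x (j/2+1)) :=
          condMean_le_right hw_cont (hxh_lt (j/2) hk1 (by omega)) hxk
            (pos_restrict hu'' (hxh_lb (j/2) hk1 (by omega)) (hx_ub (j/2+1) (by omega) (by omega)))
        have c2 : condMean w (xhat (j/2)) (x (j/2+1)) ≤ condMean w (x (j/2)) (x (j/2+1)) :=
          condMean_le_left hw_cont hcon2 (hx_lt (j/2) hk1 (by omega))
            (pos_restrict hu'' (hxh_lb (j/2) hk1 (by omega)) (hx_ub (j/2+1) (by omega) (by omega)))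
        rw [← hsmu (j/2) hk1 hkN, ← htmu (j/2) hk1 hkN] at *
        linarith
  obtain ⟨A, hA1, hAN, hA2, hAd⟩ := extract_down i0 hi01 hi0r hi0v
  obtain ⟨B, hB1, hBN, hB2, hBu⟩ := extract_up j0 hj01 hj02 hupj.2
  have hAB : A < B := by
    have hne : A ≠ B := by intro h; rw [h] at hAd; linarith
    omega
  -- choose b minimal up-cross with earlier down-cross, a latest down-cross before b
  have hex : ∃ l, 0 < xhat l - x l ∧ ∃ i2, 1 ≤ i2 ∧ i2 < l ∧ xhat i2 - x i2 < 0 :=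
    ⟨B, by linarith, A, hA1, hAB, by linarith⟩
  set b := Nat.find hex with hbdef
  have hPb : 0 < xhat b - x b ∧ ∃ i2, 1 ≤ i2 ∧ i2 < b ∧ xhat i2 - x i2 < 0 :=
    Nat.find_spec hex
  have hbmin : ∀ l, l < b → ¬(0 < xhat l - x l ∧ ∃ i2, 1 ≤ i2 ∧ i2 < l ∧ xhat i2 - x i2 < 0) :=
    fun l hl => Nat.find_min hex hl
  have hbB : b ≤ B := Nat.find_min' hex ⟨by linarith, A, hA1, hAB, by linarith⟩
  obtain ⟨hDb, i1, hi11, hi1b, hDi1⟩ := hPb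
  have hb2 : 2 ≤ b := by omega
  have hbN : b ≤ N := hbB.trans hBN
  set a := Nat.findGreatest (fun i2 => xhat i2 - x i2 < 0 ∧ 1 ≤ i2) (b-1) with hadef
  have haspec : xhat a - x a < 0 ∧ 1 ≤ a := by
    have h := Nat.findGreatest_spec (P := fun i2 => xhat i2 - x i2 < 0 ∧ 1 ≤ i2)
      (m := i1) (n := b-1) (by omega) ⟨hDi1, hi11⟩
    rw [hadef]
    exact h
  have hab1 : a ≤ b - 1 := by
    rw [hadef]; exact Nat.findGreatest_le _
  have hbetween : ∀ l, a < l → l < b → xhat l - x l = 0 := by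
    intro l hal hlb
    have h1l : 1 ≤ l := by
      have := haspec.2; omega
    have hal' : Nat.findGreatest (fun i2 => xhat i2 - x i2 < 0 ∧ 1 ≤ i2) (b-1) < l := by
      rw [← hadef]; exact hal
    have hge : ¬(xhat l - x l < 0 ∧ 1 ≤ l) :=
      Nat.findGreatest_is_greatest hal' (by omega)
    have hge' : 0 ≤ xhat l - x l := by
      by_contra hc; push_neg at hc; exact hge ⟨hc, h1l⟩
    by_contra hne0
    have hpos2 : 0 < xhat l - x l := lt_of_le_of_ne hge' (Ne.symm hne0)
    exact hbmin l hlb ⟨hpos2, a, haspec.2, hal, haspec.1⟩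
  have hDa1 : 0 ≤ xhat (a+1) - x (a+1) := by
    rcases eq_or_lt_of_le (show a+1 ≤ b by omega) with h | h
    · rw [h]; linarith
    · have := hbetween (a+1) (by omega) h; linarith
  have hDbm : xhat (b-1) - x (b-1) ≤ 0 := by
    rcases eq_or_lt_of_le hab1 with h | h
    · rw [← h]; linarith [haspec.1]
    · have := hbetween (b-1) h (by omega); linarith
  have haN : a ≤ N - 1 := by omega
  -- final case analysis on p-location
  by_cases HL : ∀ l, 1 ≤ l → l ≤ a → shat l ≤ p
  · -- left window contradiction
    refine window_left_principle (fun k => xhat k - x k) (fun k => shat k - s k) a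
      (by simp [hs0, ht0]) haspec.2 haspec.1 hDa1 ?_ ?_ ?_ ?_
    · -- φ weak
      intro l h1 hla
      have hlN : l ≤ N := by omega
      have hkey1 : condMean f (shat (l-1)) (shat l) ≤ condMean fhat (shat (l-1)) (shat l) := by
        apply condMean_le_condMean_of_ratio_mono hf_cont hfhat_cont (ht_lt l h1 hlN)
          (pos_restrict hf_pos (ht_lb _ (by omega)) (ht_ub _ hlN))
          (pos_restrict hfhat_pos (ht_lb _ (by omega)) (ht_ub _ hlN))
        exact hup.mono (Icc_subset_Icc (ht_lb _ (by omega)) (HL l h1 hla))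
      have hkey2 := core_min hf_cont hf_lc hf_pos (hs_lb _ (by omega)) (hs_lt l h1 hlN)
        (hs_ub _ hlN) (ht_lb _ (by omega)) (ht_lt l h1 hlN) (ht_ub _ hlN)
      rw [← hsx l h1 hlN] at hkey2
      rw [← htx l h1 hlN] at hkey1
      linarith
    · -- φ strict
      intro l h1 hla hne
      have hlN : l ≤ N := by omega
      have hkey1 : condMean f (shat (l-1)) (shat l) ≤ condMean fhat (shat (l-1)) (shat l) := by
        apply condMean_le_condMean_of_ratio_mono hf_cont hfhat_cont (ht_lt l h1 hlN)
          (pos_restrict hf_pos (ht_lb _ (by omega)) (ht_ub _ hlN))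
          (pos_restrict hfhat_pos (ht_lb _ (by omega)) (ht_ub _ hlN))
        exact hup.mono (Icc_subset_Icc (ht_lb _ (by omega)) (HL l h1 hla))
      have hkey2 := core_min_strict hf_cont hf_lc hf_pos (hs_lb _ (by omega)) (hs_lt l h1 hlN)
        (hs_ub _ hlN) (ht_lb _ (by omega)) (ht_lt l h1 hlN) (ht_ub _ hlN) (by simpa using hne)
      rw [← hsx l h1 hlN] at hkey2
      rw [← htx l h1 hlN] at hkey1
      linarith
    · -- μ weak
      intro l h1 hla
      exact (hμ_min l h1 (by omega)).1
    · -- μ strict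
      intro l h1 hla hne
      exact (hμ_min l h1 (by omega)).2 hne
  · push_neg at HL
    obtain ⟨l1, hl11, hl1a, hl1p⟩ := HL
    by_cases HR : ∀ l, b ≤ l → l ≤ N → p ≤ shat (l-1)
    · -- right window contradiction
      refine window_right_principle (fun k => xhat k - x k) (fun k => shat k - s k) b N
        (by simp [hsN, htN]) (by omega) hbN hDb hDbm ?_ ?_ ?_ ?_
      · intro l hbl hlN
        have h1 : 1 ≤ l := by omega
        have hkey1 : condMean fhat (shat (l-1)) (shat l) ≤ condMean f (shat (l-1)) (shat l) := by
          apply condMean_ge_condMean_of_ratio_anti hf_cont hfhat_cont (ht_lt l h1 hlN)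
            (pos_restrict hf_pos (ht_lb _ (by omega)) (ht_ub _ hlN))
            (pos_restrict hfhat_pos (ht_lb _ (by omega)) (ht_ub _ hlN))
          exact hdown.mono (Icc_subset_Icc (HR l hbl hlN) (ht_ub _ hlN))
        have hkey2 := core_max hf_cont hf_lc hf_pos (hs_lb _ (by omega)) (hs_lt l h1 hlN)
          (hs_ub _ hlN) (ht_lb _ (by omega)) (ht_lt l h1 hlN) (ht_ub _ hlN)
        rw [← hsx l h1 hlN] at hkey2
        rw [← htx l h1 hlN] at hkey1
        linarith
      · intro l hbl hlN hne
        have h1 : 1 ≤ l := by omega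
        have hkey1 : condMean fhat (shat (l-1)) (shat l) ≤ condMean f (shat (l-1)) (shat l) := by
          apply condMean_ge_condMean_of_ratio_anti hf_cont hfhat_cont (ht_lt l h1 hlN)
            (pos_restrict hf_pos (ht_lb _ (by omega)) (ht_ub _ hlN))
            (pos_restrict hfhat_pos (ht_lb _ (by omega)) (ht_ub _ hlN))
          exact hdown.mono (Icc_subset_Icc (HR l hbl hlN) (ht_ub _ hlN))
        have hkey2 := core_max_strict hf_cont hf_lc hf_pos (hs_lb _ (by omega)) (hs_lt l h1 hlN)
          (hs_ub _ hlN) (ht_lb _ (by omega)) (ht_lt l h1 hlN) (ht_ub _ hlN) (by simpa using hne)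
        rw [← hsx l h1 hlN] at hkey2
        rw [← htx l h1 hlN] at hkey1
        linarith
      · intro l hbl hlN
        exact (hμ_max l (by omega) hlN).1
      · intro l hbl hlN hne
        exact (hμ_max l (by omega) hlN).2 hne
    · push_neg at HR
      obtain ⟨l2, hl2b, hl2N, hl2p⟩ := HR
      have hmono2 : shat l1 ≤ shat (l2 - 1) :=
        chain_le shat htmono l1 (l2-1) (by omega) (by omega)
      linarith
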